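/- For k > 0, the exponentiated isochoric Hencky energy W_k : GL⁺(2) → ℝ defined by W_k(F) = exp( (k/2)·(log(K(F) + √(K(F)² − 1)))² ), where K(F) = ‖F‖²/(2·det F) with the Frobenius norm, is rank-one convex on GL⁺(2) if and only if k ≥ 1/4, and is polyconvex on GL⁺(2) if and only if k ≥ 1/4. -/

import Mathlib

open Matrix Set

noncomputable section

/-- The space of real 2×2 matrices. -/
abbrev Mat2 : Type := Matrix (Fin 2) (Fin 2) ℝ

/-- The special orthogonal group SO(2): orthogonal 2×2 matrices with determinant 1. -/
def SO2 : Set Mat2 := {Q : Mat2 | Qᵀ * Q = 1 ∧ Q.det = 1}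

/-- A function `W` (viewed on GL⁺(2) = {F | 0 < det F}) is polyconvex if there is a
convex function `P : ℝ^{2×2} × ℝ → ℝ ∪ {+∞}` with `W F = P (F, det F)` on GL⁺(2). -/
def Polyconvex (W : Mat2 → ℝ) : Prop :=
  ∃ P : Mat2 × ℝ → EReal,
    (∀ x y : Mat2 × ℝ, ∀ a b : ℝ, 0 ≤ a → 0 ≤ b → a + b = 1 →
      P (a • x + b • y) ≤ (a : EReal) * P x + (b : EReal) * P y) ∧
    (∀ F : Mat2, 0 < F.det → (W F : EReal) = P (F, F.det))

/-- Rank-one convexity of `W` on GL⁺(2): convexity along rank-one line segments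
lying in GL⁺(2). -/
def RankOneConvex (W : Mat2 → ℝ) : Prop :=
  ∀ F : Mat2, 0 < F.det → ∀ ξ η : Fin 2 → ℝ, ∀ θ : ℝ, θ ∈ Set.Icc (0:ℝ) 1 →
    (∀ t ∈ Set.Icc (0:ℝ) 1, 0 < (F + t • vecMulVec ξ η).det) →
    W (F + (1 - θ) • vecMulVec ξ η) ≤ θ * W F + (1 - θ) * W (F + vecMulVec ξ η)

/-- Objectivity and isotropy: bi-SO(2)-invariance on GL⁺(2). -/
def ObjectiveIsotropic (W : Mat2 → ℝ) : Prop :=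
  ∀ F : Mat2, 0 < F.det → ∀ Q₁ Q₂ : Mat2, Q₁ ∈ SO2 → Q₂ ∈ SO2 →
    W (Q₁ * F * Q₂) = W F

/-- Isochoric: invariance under positive scaling on GL⁺(2). -/
def Isochoric (W : Mat2 → ℝ) : Prop :=
  ∀ F : Mat2, 0 < F.det → ∀ a : ℝ, 0 < a → W (a • F) = W F

/-- The 2×2 diagonal matrix diag(a, b). -/
def diag2 (a b : ℝ) : Mat2 := !![a, 0; 0, b]

/-- The squared Frobenius norm of a 2×2 matrix. -/
def frobSq (F : Mat2) : ℝ := ∑ i, ∑ j, (F i j) ^ 2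

/-- The operator norm of `F` induced by the Euclidean norm on ℝ²:
the supremum of ‖F·x‖ over Euclidean-unit vectors x. -/
def opNorm2 (F : Mat2) : ℝ :=
  sSup {r : ℝ | ∃ x : Fin 2 → ℝ, (x 0) ^ 2 + (x 1) ^ 2 = 1 ∧
    r = Real.sqrt ((F.mulVec x 0) ^ 2 + (F.mulVec x 1) ^ 2)}

/-- The planar distortion `K(F) = ‖F‖²/(2 det F)`. -/
def distortionK (F : Mat2) : ℝ := frobSq F / (2 * F.det)


namespace HenckyAux


def hfun (k : ℝ) (t : ℝ) : ℝ := Real.exp ((k/2) * (Real.log t)^2)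
def hfun' (k : ℝ) (t : ℝ) : ℝ := hfun k t * (k * Real.log t / t)
def hfun'' (k : ℝ) (t : ℝ) : ℝ :=
  hfun k t * ((k * Real.log t / t)^2 + k * (1 - Real.log t) / t^2)

lemma hfun_pos (k t : ℝ) : 0 < hfun k t := Real.exp_pos _

lemma hasDerivAt_hfun (k : ℝ) {t : ℝ} (ht : 0 < t) : HasDerivAt (hfun k) (hfun' k t) t := by
  have h1 : HasDerivAt (fun x : ℝ => (k/2) * (Real.log x)^2)
      ((k/2) * (2 * Real.log t ^ 1 * t⁻¹)) t :=
    (((Real.hasDerivAt_log ht.ne').pow 2)).const_mul (k/2)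
  have h2 := h1.exp
  convert h2 using 1
  rfl
  simp only [hfun, hfun']
  field_simp

lemma hasDerivAt_hfun' (k : ℝ) {t : ℝ} (ht : 0 < t) : HasDerivAt (hfun' k) (hfun'' k t) t := by
  have hg : HasDerivAt (fun x : ℝ => k * Real.log x / x)
      (((k * t⁻¹) * t - (k * Real.log t) * 1) / t^2) t := by
    exact ((Real.hasDerivAt_log ht.ne').const_mul k).div (hasDerivAt_id t) ht.ne'
  have h := (hasDerivAt_hfun k ht).mul hg
  refine h.congr_deriv ?_
  simp only [hfun'', hfun']
  field_simp

lemma deriv_hfun (k : ℝ) {t : ℝ} (ht : 0 < t) : deriv (hfun k) t = hfun' k t :=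
  (hasDerivAt_hfun k ht).deriv

lemma deriv2_hfun (k : ℝ) {t : ℝ} (ht : 0 < t) :
    deriv (deriv (hfun k)) t = hfun'' k t := by
  have hev : deriv (hfun k) =ᶠ[nhds t] hfun' k := by
    filter_upwards [IsOpen.mem_nhds isOpen_Ioi (show t ∈ Ioi (0:ℝ) from ht)] with x hx
    exact deriv_hfun k hx
  rw [hev.deriv_eq]
  exact (hasDerivAt_hfun' k ht).deriv

lemma hfun''_factor (k : ℝ) {t : ℝ} (ht : 0 < t) :
    hfun'' k t = hfun k t * k / t^2 * (k * (Real.log t)^2 + 1 - Real.log t) := by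
  unfold hfun''
  field_simp
  ring

lemma hfun_contOn (k : ℝ) {D : Set ℝ} (hD : ∀ t ∈ D, (0:ℝ) < t) : ContinuousOn (hfun k) D :=
  fun t ht => (hasDerivAt_hfun k (hD t ht)).continuousAt.continuousWithinAt

lemma hfun_convexOn (k : ℝ) (hk : 0 < k) (hk4 : 1/4 ≤ k) : ConvexOn ℝ (Ici 1) (hfun k) := by
  apply convexOn_of_deriv2_nonneg (convex_Ici 1)
    (hfun_contOn k (fun t ht => lt_of_lt_of_le one_pos ht))
  · rw [interior_Ici]
    exact fun t ht => (hasDerivAt_hfun k (lt_trans one_pos ht)).differentiableAt.differentiableWithinAt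
  · rw [interior_Ici]
    intro t ht
    have ht0 : (0:ℝ) < t := lt_trans one_pos ht
    have hev : deriv (hfun k) =ᶠ[nhds t] hfun' k := by
      filter_upwards [IsOpen.mem_nhds isOpen_Ioi (show t ∈ Ioi (0:ℝ) from ht0)] with x hx
      exact deriv_hfun k hx
    exact ((hasDerivAt_hfun' k ht0).differentiableAt.congr_of_eventuallyEq hev).differentiableWithinAt
  · rw [interior_Ici]
    intro t ht
    have ht0 : (0:ℝ) < t := lt_trans one_pos ht
    have h2 : deriv^[2] (hfun k) t = hfun'' k t := by
      simp only [Function.iterate_succ, Function.iterate_zero, Function.comp_apply, id]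
      exact deriv2_hfun k ht0
    rw [h2, hfun''_factor k ht0]
    have hquad : 0 ≤ k * (Real.log t)^2 + 1 - Real.log t := by
      nlinarith [sq_nonneg (2*k*Real.log t - 1), hk]
    exact mul_nonneg (div_nonneg (mul_nonneg (hfun_pos k t).le hk.le) (sq_nonneg t)) hquad

lemma hfun_monotoneOn (k : ℝ) (hk : 0 < k) : MonotoneOn (hfun k) (Ici 1) := by
  apply monotoneOn_of_deriv_nonneg (convex_Ici 1)
    (hfun_contOn k (fun t ht => lt_of_lt_of_le one_pos ht))
  · rw [interior_Ici]
    exact fun t ht => (hasDerivAt_hfun k (lt_trans one_pos ht)).differentiableAt.differentiableWithinAt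
  · rw [interior_Ici]
    intro t ht
    have ht0 : (0:ℝ) < t := lt_trans one_pos ht
    rw [deriv_hfun k ht0]
    unfold hfun'
    have hlog : 0 ≤ Real.log t := Real.log_nonneg (le_of_lt ht)
    exact mul_nonneg (hfun_pos k t).le (div_nonneg (mul_nonneg hk.le hlog) ht0.le)




/-- largest singular value, written as a manifestly convex expression -/
def lam1 (F : Mat2) : ℝ :=
  (Real.sqrt ((F 0 0 + F 1 1)^2 + (F 0 1 - F 1 0)^2)
   + Real.sqrt ((F 0 0 - F 1 1)^2 + (F 0 1 + F 1 0)^2)) / 2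

lemma lam1_nonneg (F : Mat2) : 0 ≤ lam1 F := by
  unfold lam1
  have := Real.sqrt_nonneg ((F 0 0 + F 1 1)^2 + (F 0 1 - F 1 0)^2)
  have := Real.sqrt_nonneg ((F 0 0 - F 1 1)^2 + (F 0 1 + F 1 0)^2)
  linarith

lemma sqrt_sub_add (u1 v1 u2 v2 : ℝ) :
    Real.sqrt ((u1+u2)^2 + (v1+v2)^2) ≤
      Real.sqrt (u1^2+v1^2) + Real.sqrt (u2^2+v2^2) := by
  have hcs : u1*u2 + v1*v2 ≤ Real.sqrt ((u1^2+v1^2) * (u2^2+v2^2)) := by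
    have h2 : (u1*u2 + v1*v2)^2 ≤ (u1^2+v1^2) * (u2^2+v2^2) := by nlinarith [sq_nonneg (u1*v2 - u2*v1)]
    have := Real.sqrt_le_sqrt h2
    rw [Real.sqrt_sq_eq_abs] at this
    exact le_trans (le_abs_self _) this
  have hmul : Real.sqrt (u1^2+v1^2) * Real.sqrt (u2^2+v2^2)
      = Real.sqrt ((u1^2+v1^2) * (u2^2+v2^2)) := (Real.sqrt_mul (by positivity) _).symm
  have hrhs : 0 ≤ Real.sqrt (u1^2+v1^2) + Real.sqrt (u2^2+v2^2) := by positivity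
  rw [show Real.sqrt (u1^2+v1^2) + Real.sqrt (u2^2+v2^2)
      = Real.sqrt ((Real.sqrt (u1^2+v1^2) + Real.sqrt (u2^2+v2^2))^2) from
      (Real.sqrt_sq hrhs).symm]
  apply Real.sqrt_le_sqrt
  have e1 : Real.sqrt (u1^2+v1^2) ^ 2 = u1^2+v1^2 := Real.sq_sqrt (by positivity)
  have e2 : Real.sqrt (u2^2+v2^2) ^ 2 = u2^2+v2^2 := Real.sq_sqrt (by positivity)
  nlinarith [hcs, hmul]

lemma sqrt_scale {a : ℝ} (ha : 0 ≤ a) (u v : ℝ) :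
    Real.sqrt ((a*u)^2 + (a*v)^2) = a * Real.sqrt (u^2 + v^2) := by
  rw [show (a*u)^2 + (a*v)^2 = a^2 * (u^2+v^2) by ring, Real.sqrt_mul (sq_nonneg a),
    Real.sqrt_sq ha]

lemma lam1_convex {a b : ℝ} (ha : 0 ≤ a) (hb : 0 ≤ b) (X Y : Mat2) :
    lam1 (a • X + b • Y) ≤ a * lam1 X + b * lam1 Y := by
  have hent : ∀ i j, (a • X + b • Y) i j = a * X i j + b * Y i j := by
    intro i j; simp [Matrix.add_apply, Matrix.smul_apply, smul_eq_mul]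
  unfold lam1
  rw [hent, hent, hent, hent]
  have h1 : Real.sqrt ((a * X 0 0 + b * Y 0 0 + (a * X 1 1 + b * Y 1 1))^2
      + (a * X 0 1 + b * Y 0 1 - (a * X 1 0 + b * Y 1 0))^2)
      ≤ a * Real.sqrt ((X 0 0 + X 1 1)^2 + (X 0 1 - X 1 0)^2)
        + b * Real.sqrt ((Y 0 0 + Y 1 1)^2 + (Y 0 1 - Y 1 0)^2) := by
    have := sqrt_sub_add (a * (X 0 0 + X 1 1)) (a * (X 0 1 - X 1 0))
      (b * (Y 0 0 + Y 1 1)) (b * (Y 0 1 - Y 1 0))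
    rw [sqrt_scale ha, sqrt_scale hb] at this
    calc Real.sqrt ((a * X 0 0 + b * Y 0 0 + (a * X 1 1 + b * Y 1 1))^2
        + (a * X 0 1 + b * Y 0 1 - (a * X 1 0 + b * Y 1 0))^2)
        = Real.sqrt ((a * (X 0 0 + X 1 1) + b * (Y 0 0 + Y 1 1))^2
          + (a * (X 0 1 - X 1 0) + b * (Y 0 1 - Y 1 0))^2) := by ring_nf
      _ ≤ _ := this
  have h2 : Real.sqrt ((a * X 0 0 + b * Y 0 0 - (a * X 1 1 + b * Y 1 1))^2
      + (a * X 0 1 + b * Y 0 1 + (a * X 1 0 + b * Y 1 0))^2)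
      ≤ a * Real.sqrt ((X 0 0 - X 1 1)^2 + (X 0 1 + X 1 0)^2)
        + b * Real.sqrt ((Y 0 0 - Y 1 1)^2 + (Y 0 1 + Y 1 0)^2) := by
    have := sqrt_sub_add (a * (X 0 0 - X 1 1)) (a * (X 0 1 + X 1 0))
      (b * (Y 0 0 - Y 1 1)) (b * (Y 0 1 + Y 1 0))
    rw [sqrt_scale ha, sqrt_scale hb] at this
    calc Real.sqrt ((a * X 0 0 + b * Y 0 0 - (a * X 1 1 + b * Y 1 1))^2
        + (a * X 0 1 + b * Y 0 1 + (a * X 1 0 + b * Y 1 0))^2)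
        = Real.sqrt ((a * (X 0 0 - X 1 1) + b * (Y 0 0 - Y 1 1))^2
          + (a * (X 0 1 + X 1 0) + b * (Y 0 1 + Y 1 0))^2) := by ring_nf
      _ ≤ _ := this
  linarith

lemma frobSq_eq (F : Mat2) : frobSq F = F 0 0^2 + F 0 1^2 + F 1 0^2 + F 1 1^2 := by
  simp [frobSq, Fin.sum_univ_two]; ring


lemma scalar_surface (T D : ℝ) (hd : 0 < D) (hTneg : 0 ≤ T - 2*D) :
    ((Real.sqrt (T + 2*D) + Real.sqrt (T - 2*D)) / 2) ^ 2 / D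
      = T/(2*D) + Real.sqrt ((T/(2*D))^2 - 1)
    ∧ 1 ≤ ((Real.sqrt (T + 2*D) + Real.sqrt (T - 2*D)) / 2) ^ 2 / D := by
  have hTpos : 0 ≤ T + 2*D := by linarith
  have hsq : Real.sqrt (T + 2*D) ^ 2 = T + 2*D := Real.sq_sqrt hTpos
  have hqq : Real.sqrt (T - 2*D) ^ 2 = T - 2*D := Real.sq_sqrt hTneg
  have hprod : Real.sqrt (T + 2*D) * Real.sqrt (T - 2*D) = Real.sqrt (T^2 - 4*D^2) := by
    rw [← Real.sqrt_mul hTpos]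
    congr 1; ring
  have hlam2 : ((Real.sqrt (T + 2*D) + Real.sqrt (T - 2*D)) / 2) ^ 2
      = (T + Real.sqrt (T^2 - 4*D^2)) / 2 := by
    have : ((Real.sqrt (T + 2*D) + Real.sqrt (T - 2*D)) / 2)^2
        = (Real.sqrt (T + 2*D)^2 + Real.sqrt (T - 2*D)^2
           + 2 * (Real.sqrt (T + 2*D) * Real.sqrt (T - 2*D))) / 4 := by ring
    rw [this, hsq, hqq, hprod]; ring
  have hKs : Real.sqrt ((T/(2*D))^2 - 1) = Real.sqrt (T^2 - 4*D^2) / (2*D) := by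
    have h1 : (T / (2*D))^2 - 1 = (T^2 - 4*D^2) / (2*D)^2 := by
      field_simp; ring
    have h2 : 0 ≤ T^2 - 4*D^2 := by nlinarith
    rw [h1, Real.sqrt_div h2, Real.sqrt_sq (by linarith)]
  constructor
  · rw [hlam2, hKs]
    field_simp
  · rw [hlam2]
    have h3 : 0 ≤ Real.sqrt (T^2 - 4*D^2) := Real.sqrt_nonneg _
    rw [le_div_iff₀ hd]
    linarith

/-- The key surface identity. -/
lemma lam1_surface (F : Mat2) (hd : 0 < F.det) :
    lam1 F ^ 2 / F.det = distortionK F + Real.sqrt ((distortionK F)^2 - 1)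
    ∧ 1 ≤ lam1 F ^ 2 / F.det := by
  have hdet : F.det = F 0 0 * F 1 1 - F 0 1 * F 1 0 := Matrix.det_fin_two F
  have hs2 : (F 0 0 + F 1 1)^2 + (F 0 1 - F 1 0)^2 = frobSq F + 2*F.det := by
    rw [frobSq_eq, hdet]; ring
  have hq2 : (F 0 0 - F 1 1)^2 + (F 0 1 + F 1 0)^2 = frobSq F - 2*F.det := by
    rw [frobSq_eq, hdet]; ring
  have hTneg : 0 ≤ frobSq F - 2*F.det := by rw [← hq2]; positivity
  have hlam : lam1 F = (Real.sqrt (frobSq F + 2*F.det) + Real.sqrt (frobSq F - 2*F.det)) / 2 := by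
    unfold lam1; rw [hs2, hq2]
  have hK : distortionK F = frobSq F / (2*F.det) := rfl
  rw [hlam, hK]
  exact scalar_surface (frobSq F) F.det hd hTneg


def Wk (k : ℝ) (F : Mat2) : ℝ :=
  Real.exp ((k/2) * (Real.log (distortionK F + Real.sqrt ((distortionK F)^2 - 1)))^2)

lemma Wk_eq_hfun (k : ℝ) (F : Mat2) (hd : 0 < F.det) :
    Wk k F = hfun k (lam1 F ^ 2 / F.det) := by
  rw [Wk, hfun, (lam1_surface F hd).1]

lemma qol {p q dx dy a b : ℝ} (ha : 0 ≤ a) (hb : 0 ≤ b) (hdx : 0 < dx) (hdy : 0 < dy)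
    (hD : 0 < a*dx + b*dy) :
    (a*p + b*q)^2 / (a*dx + b*dy) ≤ a*(p^2/dx) + b*(q^2/dy) := by
  rw [div_le_iff₀ hD]
  have h1 : a*(p^2/dx) + b*(q^2/dy) = (a*p^2*dy + b*q^2*dx)/(dx*dy) := by
    field_simp
  rw [h1, div_mul_eq_mul_div, le_div_iff₀ (by positivity)]
  nlinarith [mul_nonneg (mul_nonneg ha hb) (sq_nonneg (p*dy - q*dx)), sq_nonneg (a*p+b*q),
    mul_pos hdx hdy]

lemma polyconvex_hencky (k : ℝ) (hk : 0 < k) (hk4 : 1/4 ≤ k) : Polyconvex (Wk k) := by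
  classical
  refine ⟨fun p => if 0 < p.2 then ((hfun k (max (lam1 p.1 ^ 2 / p.2) 1) : ℝ) : EReal) else ⊤,
    ?_, ?_⟩
  · rintro ⟨X, dx⟩ ⟨Y, dy⟩ a b ha hb hab
    dsimp only
    have hPnb : ∀ (Z : Mat2) (dz c : ℝ), 0 < c →
        (c : EReal) * (if 0 < (Z, dz).2 then ((hfun k (max (lam1 (Z, dz).1 ^ 2 / (Z, dz).2) 1) : ℝ) : EReal) else ⊤) ≠ ⊥ := by
      intro Z dz c hc
      by_cases h : 0 < dz
      · simp only [h, if_pos]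
        rw [← EReal.coe_mul]
        exact EReal.coe_ne_bot _
      · rw [if_neg h, EReal.mul_top_of_pos (by exact_mod_cast hc)]
        simp
    -- case a = 0
    rcases eq_or_lt_of_le ha with ha0|ha0
    · have hb1 : b = 1 := by linarith
      subst hb1
      rw [← ha0]
      simp only [zero_smul, one_smul, zero_add, zero_mul, EReal.coe_zero, EReal.coe_one, one_mul]
      exact le_refl _
    rcases eq_or_lt_of_le hb with hb0|hb0
    · have ha1 : a = 1 := by linarith
      subst ha1
      rw [← hb0]
      simp only [zero_smul, one_smul, add_zero, zero_mul, EReal.coe_zero, EReal.coe_one, one_mul]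
      exact le_refl _
    -- both positive
    by_cases hdx : 0 < dx
    · by_cases hdy : 0 < dy
      · -- main case
        have hcomb : a • ((X, dx) : Mat2 × ℝ) + b • ((Y, dy) : Mat2 × ℝ)
            = (a • X + b • Y, a*dx + b*dy) := by
          rw [Prod.smul_mk, Prod.smul_mk, Prod.mk_add_mk, smul_eq_mul, smul_eq_mul]
        rw [hcomb]
        have hD : 0 < a*dx + b*dy := by
          have := mul_pos ha0 hdx
          have := mul_nonneg hb hdy.le
          linarith
        simp only [if_pos hD, if_pos hdx, if_pos hdy]
        rw [← EReal.coe_mul, ← EReal.coe_mul, ← EReal.coe_add, EReal.coe_le_coe_iff]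
        set m1 := max (lam1 X ^ 2 / dx) 1 with hm1
        set m2 := max (lam1 Y ^ 2 / dy) 1 with hm2
        have hm1ge : 1 ≤ m1 := le_max_right _ _
        have hm2ge : 1 ≤ m2 := le_max_right _ _
        have hchain : max (lam1 (a • X + b • Y) ^ 2 / (a*dx + b*dy)) 1 ≤ a * m1 + b * m2 := by
          have hY1 : 1 ≤ a * m1 + b * m2 := by nlinarith
          refine max_le ?_ hY1
          have hL : lam1 (a • X + b • Y) ≤ a * lam1 X + b * lam1 Y := lam1_convex ha hb X Y
          have hLsq : lam1 (a • X + b • Y) ^ 2 ≤ (a * lam1 X + b * lam1 Y)^2 := by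
            have h0 := lam1_nonneg (a • X + b • Y)
            nlinarith [lam1_nonneg X, lam1_nonneg Y, mul_nonneg ha (lam1_nonneg X),
              mul_nonneg hb (lam1_nonneg Y)]
          have hstep1 : lam1 (a • X + b • Y) ^ 2 / (a*dx + b*dy)
              ≤ (a * lam1 X + b * lam1 Y)^2 / (a*dx + b*dy) := by gcongr
          have hstep2 := qol (p := lam1 X) (q := lam1 Y) ha hb hdx hdy hD
          have hstep3 : a * (lam1 X ^2 / dx) + b * (lam1 Y ^2/dy) ≤ a * m1 + b * m2 := by
            have h1 := le_max_left (lam1 X ^ 2 / dx) 1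
            have h2 := le_max_left (lam1 Y ^ 2 / dy) 1
            have h3 := mul_le_mul_of_nonneg_left h1 ha
            have h4 := mul_le_mul_of_nonneg_left h2 hb
            rw [hm1, hm2]
            linarith
          linarith
        have hmem1 : max (lam1 (a • X + b • Y) ^ 2 / (a*dx + b*dy)) 1 ∈ Ici (1:ℝ) :=
          Set.mem_Ici.2 (le_max_right _ _)
        have hmem2 : a * m1 + b * m2 ∈ Ici (1:ℝ) := by
          simp only [mem_Ici]; nlinarith
        have hmono := hfun_monotoneOn k hk hmem1 hmem2 hchain
        have hconv := (hfun_convexOn k hk hk4).2 (show m1 ∈ Ici (1:ℝ) from hm1ge)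
          (show m2 ∈ Ici (1:ℝ) from hm2ge) ha hb hab
        simp only [smul_eq_mul] at hconv
        linarith
      · -- dy ≤ 0 : RHS is top
        have hRHS : ((a : EReal) * (if 0 < ((X, dx):Mat2 × ℝ).2 then
              ((hfun k (max (lam1 ((X, dx):Mat2 × ℝ).1 ^ 2 / ((X, dx):Mat2 × ℝ).2) 1) : ℝ) : EReal) else ⊤))
            + ((b : EReal) * (if 0 < ((Y, dy):Mat2 × ℝ).2 then
              ((hfun k (max (lam1 ((Y, dy):Mat2 × ℝ).1 ^ 2 / ((Y, dy):Mat2 × ℝ).2) 1) : ℝ) : EReal) else ⊤)) = ⊤ := by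
          have : (if 0 < ((Y, dy):Mat2 × ℝ).2 then
              ((hfun k (max (lam1 ((Y, dy):Mat2 × ℝ).1 ^ 2 / ((Y, dy):Mat2 × ℝ).2) 1) : ℝ) : EReal) else ⊤) = ⊤ := by
            rw [if_neg hdy]
          rw [this, EReal.mul_top_of_pos (by exact_mod_cast hb0)]
          exact EReal.add_top_of_ne_bot (hPnb X dx a ha0)
        exact le_trans le_top (le_of_eq hRHS.symm)
    · -- dx ≤ 0 : P x = top
      have hRHS : ((a : EReal) * (if 0 < ((X, dx):Mat2 × ℝ).2 then
            ((hfun k (max (lam1 ((X, dx):Mat2 × ℝ).1 ^ 2 / ((X, dx):Mat2 × ℝ).2) 1) : ℝ) : EReal) else ⊤))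
          + ((b : EReal) * (if 0 < ((Y, dy):Mat2 × ℝ).2 then
            ((hfun k (max (lam1 ((Y, dy):Mat2 × ℝ).1 ^ 2 / ((Y, dy):Mat2 × ℝ).2) 1) : ℝ) : EReal) else ⊤)) = ⊤ := by
        have : (if 0 < ((X, dx):Mat2 × ℝ).2 then
            ((hfun k (max (lam1 ((X, dx):Mat2 × ℝ).1 ^ 2 / ((X, dx):Mat2 × ℝ).2) 1) : ℝ) : EReal) else ⊤) = ⊤ := by
          rw [if_neg hdx]
        rw [this, EReal.mul_top_of_pos (by exact_mod_cast ha0)]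
        exact EReal.top_add_of_ne_bot (hPnb Y dy b hb0)
      exact le_trans le_top (le_of_eq hRHS.symm)
  · intro F hF
    simp only [if_pos hF]
    rw [max_eq_left (lam1_surface F hF).2, Wk_eq_hfun k F hF]

lemma det_add_smul (F : Mat2) (ξ η : Fin 2 → ℝ) (t : ℝ) :
    (F + t • vecMulVec ξ η).det
      = F.det + t * (F 0 0 * (ξ 1 * η 1) + F 1 1 * (ξ 0 * η 0)
          - F 0 1 * (ξ 1 * η 0) - F 1 0 * (ξ 0 * η 1)) := by
  simp [Matrix.det_fin_two, Matrix.add_apply, Matrix.smul_apply, Matrix.vecMulVec_apply,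
    smul_eq_mul]
  ring

lemma pc_imp_roc (W : Mat2 → ℝ) (hPC : Polyconvex W) : RankOneConvex W := by
  obtain ⟨P, hPconv, hPeq⟩ := hPC
  intro F hF ξ η θ hθ hseg
  have h1 : 0 < (F + vecMulVec ξ η).det := by
    have := hseg 1 ⟨zero_le_one, le_refl 1⟩
    rwa [one_smul] at this
  have hm : 0 < (F + (1-θ) • vecMulVec ξ η).det :=
    hseg (1-θ) ⟨by linarith [hθ.2], by linarith [hθ.1]⟩
  have key := hPconv (F, F.det) (F + vecMulVec ξ η, (F + vecMulVec ξ η).det) θ (1-θ)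
    hθ.1 (by linarith [hθ.2]) (by ring)
  have hd1 := det_add_smul F ξ η 1
  rw [one_smul] at hd1
  have hdm := det_add_smul F ξ η (1-θ)
  have hpt : θ • ((F, F.det) : Mat2 × ℝ)
      + (1-θ) • ((F + vecMulVec ξ η, (F + vecMulVec ξ η).det) : Mat2 × ℝ)
      = (F + (1-θ) • vecMulVec ξ η, (F + (1-θ) • vecMulVec ξ η).det) := by
    have hfst : θ • F + (1-θ) • (F + vecMulVec ξ η) = F + (1-θ) • vecMulVec ξ η := by
      ext i j
      simp [Matrix.add_apply, Matrix.smul_apply, smul_eq_mul]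
      ring
    have hsnd : θ * F.det + (1-θ) * (F + vecMulVec ξ η).det
        = (F + (1-θ) • vecMulVec ξ η).det := by
      rw [hd1, hdm]; ring
    rw [Prod.smul_mk, Prod.smul_mk, Prod.mk_add_mk, hfst]
    rw [smul_eq_mul, smul_eq_mul, hsnd]
  rw [hpt, ← hPeq _ hF, ← hPeq _ h1, ← hPeq _ hm] at key
  rw [← EReal.coe_mul, ← EReal.coe_mul, ← EReal.coe_add, EReal.coe_le_coe_iff] at key
  exact key

lemma Wk_diag (k a : ℝ) (ha : 1 ≤ a) : Wk k !![a,0;0,1] = hfun k a := by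
  have ha0 : 0 < a := lt_of_lt_of_le one_pos ha
  have hdet : (!![a,0;0,1] : Mat2).det = a := by simp [Matrix.det_fin_two]
  have hfrob : frobSq (!![a,0;0,1] : Mat2) = a^2 + 1 := by rw [frobSq_eq]; norm_num
  have hK : distortionK !![a,0;0,1] = (a^2+1)/(2*a) := by
    rw [distortionK, hdet, hfrob]
  have h1 : ((a^2+1)/(2*a))^2 - 1 = ((a^2-1)/(2*a))^2 := by field_simp; ring
  have h2 : Real.sqrt (((a^2+1)/(2*a))^2 - 1) = (a^2-1)/(2*a) := by
    rw [h1, Real.sqrt_sq (div_nonneg (by nlinarith) (by linarith))]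
  rw [Wk, hK, h2]
  have h3 : (a^2+1)/(2*a) + (a^2-1)/(2*a) = a := by field_simp; ring
  rw [h3, hfun]

lemma roc_imp (k : ℝ) (hk : 0 < k) (hROC : RankOneConvex (Wk k)) : 1/4 ≤ k := by
  by_contra hlt
  push_neg at hlt
  have h4k : 0 < 1 - 4*k := by linarith
  have hu0 : (0:ℝ) < 1/(2*k) := by positivity
  set u0 : ℝ := 1/(2*k) with hu0def
  set δ : ℝ := Real.sqrt (1-4*k)/(4*k) with hδdef
  have hδpos : 0 < δ := div_pos (Real.sqrt_pos.2 h4k) (by linarith)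
  have hδle : δ ≤ 1/(4*k) := by
    have hs1 : Real.sqrt (1-4*k) ≤ 1 := Real.sqrt_le_one.mpr (by linarith)
    rw [hδdef, div_le_div_iff₀ (by linarith) (by linarith)]
    nlinarith
  have hu0δ : 1/(4*k) ≤ u0 - δ := by
    have : u0 - 1/(4*k) = 1/(4*k) := by rw [hu0def]; field_simp; ring
    linarith
  have h14k : (0:ℝ) < 1/(4*k) := by positivity
  set a1 : ℝ := Real.exp (u0 - δ) with ha1def
  set a2 : ℝ := Real.exp (u0 + δ) with ha2def
  have ha1 : 1 < a1 := by
    rw [ha1def, show (1:ℝ) = Real.exp 0 from Real.exp_zero.symm]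
    exact Real.exp_lt_exp.2 (by linarith)
  have ha12 : a1 < a2 := Real.exp_lt_exp.2 (by linarith)
  have ha1pos : 0 < a1 := lt_trans one_pos ha1
  -- the quadratic is negative on the log-interval
  have hquadneg : ∀ u : ℝ, u0 - δ ≤ u → u ≤ u0 + δ → k*u^2 + 1 - u < 0 := by
    intro u h1 h2
    have hform : k*u^2 + 1 - u = k*(u - u0)^2 + (1 - 1/(4*k)) := by
      rw [hu0def]; field_simp; ring
    have hsq : (u - u0)^2 ≤ δ^2 := by nlinarith
    have hδ2 : k * δ^2 = (1-4*k)/(16*k) := by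
      rw [hδdef, div_pow, Real.sq_sqrt h4k.le]
      field_simp; ring
    have hq2 : (1-4*k)/(16*k) + (1 - 1/(4*k)) = (12*k - 3)/(16*k) := by
      field_simp; ring
    have hneg : (12*k - 3)/(16*k) < 0 := div_neg_of_neg_of_pos (by linarith) (by linarith)
    have hkk : k*(u - u0)^2 ≤ k * δ^2 := mul_le_mul_of_nonneg_left hsq hk.le
    linarith
  -- strict concavity of hfun k on [a1, a2]
  have hconc : StrictConcaveOn ℝ (Icc a1 a2) (hfun k) := by
    apply strictConcaveOn_of_deriv2_neg (convex_Icc _ _)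
      (hfun_contOn k (fun t ht => lt_of_lt_of_le ha1pos ht.1))
    intro t ht
    rw [interior_Icc] at ht
    have ht0 : 0 < t := lt_trans ha1pos ht.1
    have hit : deriv^[2] (hfun k) t = hfun'' k t := by
      simp only [Function.iterate_succ, Function.iterate_zero, Function.comp_apply, id]
      exact deriv2_hfun k ht0
    rw [hit, hfun''_factor k ht0]
    have hlog1 : u0 - δ ≤ Real.log t := by
      have := Real.log_lt_log ha1pos ht.1
      rw [ha1def, Real.log_exp] at this
      linarith
    have hlog2 : Real.log t ≤ u0 + δ := by
      have := Real.log_lt_log ht0 ht.2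
      rw [ha2def, Real.log_exp] at this
      linarith
    have hq := hquadneg (Real.log t) hlog1 hlog2
    apply mul_neg_of_pos_of_neg
    · exact div_pos (mul_pos (hfun_pos k t) hk) (by positivity)
    · linarith
  have hmid := hconc.2 (left_mem_Icc.2 ha12.le) (right_mem_Icc.2 ha12.le) (ne_of_lt ha12)
    (one_half_pos) (one_half_pos) (by norm_num)
  simp only [smul_eq_mul] at hmid
  -- instantiate rank-one convexity
  have hMeq : vecMulVec ![(1:ℝ),0] ![a2-a1,0] = !![a2-a1,0;0,0] := by
    ext i j
    fin_cases i <;> fin_cases j <;> simp [Matrix.vecMulVec_apply]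
  have hFt : ∀ t : ℝ, (!![a1,0;0,1] : Mat2) + t • vecMulVec ![(1:ℝ),0] ![a2-a1,0]
      = !![a1 + t*(a2-a1), 0; 0, 1] := by
    intro t
    rw [hMeq]
    ext i j
    fin_cases i <;> fin_cases j <;>
      simp [Matrix.add_apply, Matrix.smul_apply, smul_eq_mul]
  have hdetF : (!![a1,0;0,1] : Mat2).det = a1 := by simp [Matrix.det_fin_two]
  have hseg : ∀ t ∈ Icc (0:ℝ) 1,
      0 < ((!![a1,0;0,1] : Mat2) + t • vecMulVec ![(1:ℝ),0] ![a2-a1,0]).det := by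
    intro t ht
    rw [hFt t]
    have : (!![a1 + t*(a2-a1), 0; 0, 1] : Mat2).det = a1 + t*(a2-a1) := by
      simp [Matrix.det_fin_two]
    rw [this]
    nlinarith [ht.1, ha12]
  have hroc := hROC !![a1,0;0,1] (by rw [hdetF]; exact ha1pos) ![(1:ℝ),0] ![a2-a1,0] (1/2)
    ⟨by norm_num, by norm_num⟩ hseg
  have e1 : (!![a1,0;0,1] : Mat2) + (1 - 1/2 : ℝ) • vecMulVec ![(1:ℝ),0] ![a2-a1,0]
      = !![(a1+a2)/2, 0; 0, 1] := by
    rw [hFt (1 - 1/2 : ℝ)]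
    norm_num
    ring_nf
  have e2 : (!![a1,0;0,1] : Mat2) + vecMulVec ![(1:ℝ),0] ![a2-a1,0] = !![a2, 0; 0, 1] := by
    have := hFt 1
    rw [one_smul] at this
    rw [this]
    norm_num
  have w1 : Wk k !![(a1+a2)/2, 0; 0, 1] = hfun k ((a1+a2)/2) :=
    Wk_diag k _ (by nlinarith)
  have w2 : Wk k !![a1, 0; 0, 1] = hfun k a1 := Wk_diag k _ ha1.le
  have w3 : Wk k !![a2, 0; 0, 1] = hfun k a2 := Wk_diag k _ (by linarith)
  rw [e1, e2, w1, w2, w3] at hroc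
  have hm2 : 1/2 * a1 + 1/2 * a2 = (a1+a2)/2 := by ring
  rw [hm2] at hmid
  linarith

end HenckyAux

/-- for `k > 0`, the exponentiated isochoric Hencky energy
`exp((k/2)·(log(K(F)+√(K(F)²−1)))²) = exp(k‖dev₂ log U‖²)` is rank-one convex
iff `k ≥ 1/4`, and polyconvex iff `k ≥ 1/4`. -/
theorem exponentiated_hencky_rankOneConvex_polyconvex_iff (k : ℝ) (hk : 0 < k) :
    (RankOneConvex (fun F =>
        Real.exp ((k/2) *
          (Real.log (distortionK F + Real.sqrt ((distortionK F) ^ 2 - 1))) ^ 2)) ↔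
      1/4 ≤ k) ∧
    (Polyconvex (fun F =>
        Real.exp ((k/2) *
          (Real.log (distortionK F + Real.sqrt ((distortionK F) ^ 2 - 1))) ^ 2)) ↔
      1/4 ≤ k) := by
  have h1 : RankOneConvex (HenckyAux.Wk k) → 1/4 ≤ k := HenckyAux.roc_imp k hk
  have h2 : 1/4 ≤ k → Polyconvex (HenckyAux.Wk k) := HenckyAux.polyconvex_hencky k hk
  have h3 : Polyconvex (HenckyAux.Wk k) → RankOneConvex (HenckyAux.Wk k) :=
    HenckyAux.pc_imp_roc (HenckyAux.Wk k)
  exact ⟨⟨h1, fun h => h3 (h2 h)⟩, ⟨fun h => h1 (h3 h), h2⟩⟩
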